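/- For all natural numbers N ≥ 1, every real c > 0 and every real k, one has ∑_{i=0}^{N} [ |1/2 − i/N| < c·N^{−k} ] · C(N, i) / 2^N ≤ (2c·N^{1−k} + 1) · C(N, ⌊N/2⌋) / 2^N, where [·] equals 1 when the condition holds and 0 otherwise, C(N, i) denotes the binomial coefficient, and N^{−k}, N^{1−k} are real powers of N. Equivalently: if N₁ is the number of successes in N independent fair coin flips, then the probability that |1/2 − N₁/N| < c·N^{−k} is at most (2c·N^{1−k} + 1)·C(N, ⌊N/2⌋)·2^{−N}. -/

import Mathlib

open scoped BigOperators

/-- Counting estimate for the optimality of the `O(1/√N)` generalization gap: if `N₁` is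
the number of successes in `N` fair coin flips, then the probability that
`|1/2 − N₁/N| < c·N^{−k}` is at most `(2c·N^{1−k} + 1) · C(N, ⌊N/2⌋) / 2^N`. -/
theorem prob_small_gap_le (N : ℕ) (hN : 1 ≤ N) (c k : ℝ) (hc : 0 < c) :
    ∑ i ∈ Finset.range (N + 1),
      (if |1 / 2 - (i : ℝ) / N| < c * (N : ℝ) ^ (-k) then (N.choose i : ℝ) else 0)
        / 2 ^ N
    ≤ (2 * c * (N : ℝ) ^ (1 - k) + 1) * (N.choose (N / 2) : ℝ) / 2 ^ N := by
  have hN0 : (0 : ℝ) < N := by exact_mod_cast hN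
  have hNne : (N : ℝ) ≠ 0 := ne_of_gt hN0
  set t : ℝ := c * (N : ℝ) ^ (1 - k) with ht
  have htpos : 0 < t := by
    apply mul_pos hc (Real.rpow_pos_of_pos hN0 _)
  set S := (Finset.range (N + 1)).filter
      (fun i : ℕ => |1 / 2 - (i : ℝ) / N| < c * (N : ℝ) ^ (-k)) with hSdef
  have hmem : ∀ i ∈ S, |(N : ℝ) / 2 - i| < t := by
    intro i hi
    rw [hSdef, Finset.mem_filter] at hi
    have h := hi.2
    have habs : |(N : ℝ) / 2 - i| = N * |1 / 2 - (i : ℝ) / N| := by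
      have heq : (N : ℝ) / 2 - i = N * (1 / 2 - (i : ℝ) / N) := by
        field_simp
      rw [heq, abs_mul, abs_of_pos hN0]
    rw [habs, ht]
    calc (N : ℝ) * |1 / 2 - (i : ℝ) / N| < N * (c * (N : ℝ) ^ (-k)) :=
          mul_lt_mul_of_pos_left h hN0
      _ = c * (N : ℝ) ^ (1 - k) := by
          rw [show (1 : ℝ) - k = 1 + (-k) by ring, Real.rpow_add hN0, Real.rpow_one]
          ring
  have hcard : (S.card : ℝ) ≤ 2 * t + 1 := by
    rcases S.eq_empty_or_nonempty with hE | hne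
    · rw [hE]; simp; positivity
    · set m := S.min' hne
      set M := S.max' hne
      have hmM : m ≤ M := S.min'_le _ (S.max'_mem hne)
      have hsub : S ⊆ Finset.Icc m M := by
        intro i hi
        exact Finset.mem_Icc.mpr ⟨S.min'_le i hi, S.le_max' i hi⟩
      have hc1 : S.card ≤ M + 1 - m := by
        calc S.card ≤ (Finset.Icc m M).card := Finset.card_le_card hsub
          _ = M + 1 - m := Nat.card_Icc m M
      have hm := abs_lt.mp (hmem m (S.min'_mem hne))
      have hM := abs_lt.mp (hmem M (S.max'_mem hne))
      have hcast : (S.card : ℝ) ≤ (M : ℝ) + 1 - m := by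
        have := (Nat.cast_le (α := ℝ)).mpr hc1
        rwa [Nat.cast_sub (by omega), Nat.cast_add, Nat.cast_one] at this
      have : (M : ℝ) - m < 2 * t := by linarith [hm.1, hm.2, hM.1, hM.2]
      linarith
  rw [← Finset.sum_div]
  apply div_le_div_of_nonneg_right ?_ (by positivity)
  · calc ∑ i ∈ Finset.range (N + 1),
        (if |1 / 2 - (i : ℝ) / N| < c * (N : ℝ) ^ (-k) then (N.choose i : ℝ) else 0)
        = ∑ i ∈ S, (N.choose i : ℝ) := (Finset.sum_filter _ _).symm
      _ ≤ S.card • (N.choose (N / 2) : ℝ) := by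
          apply Finset.sum_le_card_nsmul
          intro i _
          exact_mod_cast Nat.choose_le_middle i N
      _ = (S.card : ℝ) * (N.choose (N / 2) : ℝ) := nsmul_eq_mul _ _
      _ ≤ (2 * c * (N : ℝ) ^ (1 - k) + 1) * (N.choose (N / 2) : ℝ) := by
          apply mul_le_mul_of_nonneg_right _ (Nat.cast_nonneg _)
          calc (S.card : ℝ) ≤ 2 * t + 1 := hcard
            _ = 2 * c * (N : ℝ) ^ (1 - k) + 1 := by rw [ht]; ring
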